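/- Let p, q ∈ ℚ∞ with p < q and let x, y ∈ H. Then ⟨v_p^x, v_q^y⟩ = 0 if and only if the following condition, depending on the types (t(p), t(q)), holds: if t(p) = t(q) (any of the three values), then x = -y and d(p,q) = 2; if (t(p),t(q)) = (0,1), then y ∈ -H⁺x and d(p,q) = 1; if (t(p),t(q)) = (0,∞), then x ∈ H⁺y and d(p,q) = 1; if (t(p),t(q)) = (1,0), then x ∈ -H⁺y and d(p,q) = 1; if (t(p),t(q)) = (1,∞), then y ∈ -H⁺x and d(p,q) = 1; if (t(p),t(q)) = (∞,0), then y ∈ H⁺x and d(p,q) = 1; if (t(p),t(q)) = (∞,1), then x ∈ -H⁺y and d(p,q) = 1. -/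

import Mathlib

open Matrix

abbrev V6 := Fin 6 → ℤ

def C6 : Matrix (Fin 6) (Fin 6) ℤ :=
  !![1,0,-1,-1,1,1;
     0,1,-1,-1,1,1;
     0,0,1,0,-1,-1;
     0,0,0,1,-1,-1;
     0,0,0,0,1,0;
     0,0,0,0,0,1]

/-- The bilinear form `⟨x,y⟩ = xᵀ C y` on `ℤ^6`. -/
def form (x y : V6) : ℤ := x ⬝ᵥ C6.mulVec y

/-- The quaternion `i`. -/
def qI : Quaternion ℤ := ⟨0,1,0,0⟩
/-- The quaternion `j`. -/
def qJ : Quaternion ℤ := ⟨0,0,1,0⟩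
/-- The quaternion `k`. -/
def qK : Quaternion ℤ := ⟨0,0,0,1⟩

instance : DecidableEq (Quaternion ℤ) := fun x y =>
  decidable_of_iff (x.re = y.re ∧ x.imI = y.imI ∧ x.imJ = y.imJ ∧ x.imK = y.imK)
    ⟨fun ⟨h1, h2, h3, h4⟩ => QuaternionAlgebra.ext h1 h2 h3 h4,
     fun h => by subst h; exact ⟨rfl, rfl, rfl, rfl⟩⟩

/-- The quaternion group `H = {±1, ±i, ±j, ±k}`. -/
def Hset : Finset (Quaternion ℤ) := {1, -1, qI, -qI, qJ, -qJ, qK, -qK}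

/-- The subset `H⁺ = {1, i, j, k}`. -/
def Hplus : Finset (Quaternion ℤ) := {1, qI, qJ, qK}

/-- Index type for the three special slopes `0`, `1`, `∞`. -/
inductive Ty | zero | one | inf
deriving DecidableEq

def h0 : V6 := ![0,0,1,1,1,1]
def h1 : V6 := ![1,1,2,2,1,1]
def hinf : V6 := ![1,1,1,1,0,0]

def hTy : Ty → V6
  | .zero => h0
  | .one => h1
  | .inf => hinf

/-- The vectors `v_t^x` for `t ∈ {0,1,∞}` and `x ∈ H⁺`. -/
def vposTy : Ty → Quaternion ℤ → V6
  | .zero, x => if x = 1 then ![0,0,1,0,1,0] else if x = qI then ![-1,0,0,0,0,0]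
      else if x = qJ then ![0,0,1,0,0,1] else ![0,1,1,1,1,1]
  | .one, x => if x = 1 then ![1,0,1,1,1,0] else if x = qI then ![0,1,1,1,1,0]
      else if x = qJ then ![0,0,1,0,0,0] else ![1,1,2,1,1,1]
  | .inf, x => if x = 1 then ![1,0,0,1,0,0] else if x = qI then ![1,1,1,1,1,0]
      else if x = qJ then ![0,0,0,0,0,-1] else ![1,0,1,0,0,0]

/-- The vectors `v_t^x` for `t ∈ {0,1,∞}` and `x ∈ H`, with `v_t^{-x} = h_t - v_t^x`. -/
def vTy (t : Ty) (x : Quaternion ℤ) : V6 :=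
  if x ∈ Hplus then vposTy t x else hTy t - vposTy t (-x)

/-- `a(q)`: numerator, with `a(∞) = 1`. -/
def aQ : WithTop ℚ → ℤ := WithTop.recTopCoe 1 Rat.num

/-- `b(q)`: denominator, with `b(∞) = 0`. -/
def bQ : WithTop ℚ → ℤ := WithTop.recTopCoe 0 (fun x => (x.den : ℤ))

/-- The type `t(q) ∈ {0,1,∞}` of a slope `q`. -/
def tyQ (q : WithTop ℚ) : Ty :=
  if aQ q % 2 = 0 then Ty.zero else if bQ q % 2 = 1 then Ty.one else Ty.inf

/-- `⌊n⌋₂ = n/2` for even `n` and `(n-1)/2` for odd `n`. -/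
def half2 (n : ℤ) : ℤ := if Even n then n / 2 else (n - 1) / 2

/-- `h_q = b(q)·h₀ + a(q)·h_∞`. -/
def hQ (q : WithTop ℚ) : V6 := bQ q • h0 + aQ q • hinf

/-- `v_q^x = v_{t(q)}^x + ⌊b(q)⌋₂·h₀ + ⌊a(q)⌋₂·h_∞`. -/
def vQ (q : WithTop ℚ) (x : Quaternion ℤ) : V6 :=
  vTy (tyQ q) x + half2 (bQ q) • h0 + half2 (aQ q) • hinf

/-- `rk e = ⟨e, h_∞⟩`. -/
def rk (e : V6) : ℤ := form e hinf

/-- `deg e = ⟨h₀, e⟩`. -/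
def degV (e : V6) : ℤ := form h0 e

/-- `e` is positive if `rk e > 0`, or `rk e = 0` and `deg e > 0`. -/
def PosV (e : V6) : Prop := 0 < rk e ∨ (rk e = 0 ∧ 0 < degV e)

/-- `d(p,q) = |a(q)b(p) - a(p)b(q)|`. -/
def dQ (p q : WithTop ℚ) : ℤ := |aQ q * bQ p - aQ p * bQ q|

/-- Complexity `c(p) = |a(p)| + |b(p)| + |a(p)+b(p)|`. -/
def cpx (p : WithTop ℚ) : ℤ := |aQ p| + |bQ p| + |aQ p + bQ p|



/-- Parity marker for the numerator by type. -/
def Ea : Ty → ℤ | .zero => 0 | .one => 1 | .inf => 1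
/-- Parity marker for the denominator by type. -/
def Eb : Ty → ℤ | .zero => 1 | .one => 1 | .inf => 0

lemma half2_eq (n : ℤ) : 2 * half2 n + n % 2 = n := by
  simp only [half2]
  split_ifs with h
  · rw [Int.even_iff] at h; omega
  · rw [Int.even_iff] at h; omega

lemma aQ_coe (r : ℚ) : aQ (r : WithTop ℚ) = r.num := rfl
lemma bQ_coe (r : ℚ) : bQ (r : WithTop ℚ) = (r.den : ℤ) := rfl
lemma aQ_top : aQ ⊤ = 1 := rfl
lemma bQ_top : bQ ⊤ = 0 := rfl

lemma parity (q : WithTop ℚ) : aQ q % 2 = Ea (tyQ q) ∧ bQ q % 2 = Eb (tyQ q) := by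
  have hcop : ¬(aQ q % 2 = 0 ∧ bQ q % 2 = 0) := by
    induction q using WithTop.recTopCoe with
    | top => rw [aQ_top, bQ_top]; omega
    | coe r =>
      rw [aQ_coe, bQ_coe]
      rintro ⟨h1, h2⟩
      have hh1 : 2 ∣ r.num.natAbs := by omega
      have hh2 : 2 ∣ r.den := by omega
      have h4 : r.num.natAbs.gcd r.den = 1 := r.reduced
      have := Nat.dvd_gcd hh1 hh2
      rw [h4] at this
      omega
  unfold tyQ
  split_ifs with h1 h2 <;> simp only [Ea, Eb] <;> omega

lemma dpos (p q : WithTop ℚ) (h : p < q) : 1 ≤ aQ q * bQ p - aQ p * bQ q := by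
  induction q using WithTop.recTopCoe with
  | top =>
    induction p using WithTop.recTopCoe with
    | top => exact absurd h (lt_irrefl _)
    | coe r =>
      rw [aQ_top, bQ_top, aQ_coe, bQ_coe]
      have := r.pos
      omega
  | coe s =>
    induction p using WithTop.recTopCoe with
    | top => exact absurd h (by simp)
    | coe r =>
      rw [aQ_coe, bQ_coe, aQ_coe, bQ_coe]
      have hrs : r < s := by exact_mod_cast h
      rw [Rat.lt_iff] at hrs
      omega

lemma form_expand (u v : V6) (n m n' m' : ℤ) :
    form (u + n • h0 + m • hinf) (v + n' • h0 + m' • hinf)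
      = form u v + n' * form u h0 + m' * form u hinf + n * form h0 v + m * form hinf v
        + n * n' * form h0 h0 + n * m' * form h0 hinf + m * n' * form hinf h0
        + m * m' * form hinf hinf := by
  simp only [form, Matrix.mulVec_add, Matrix.mulVec_smul, dotProduct_add, add_dotProduct,
    smul_dotProduct, dotProduct_smul, smul_eq_mul]
  ring

lemma F00 : form h0 h0 = 0 := by decide
lemma F0i : form h0 hinf = 2 := by decide
lemma Fi0 : form hinf h0 = -2 := by decide
lemma Fii : form hinf hinf = 0 := by decide

lemma LA : ∀ t : Ty, ∀ x ∈ Hset, form (vTy t x) h0 = -Ea t := by intro t; cases t <;> decide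
lemma LB : ∀ t : Ty, ∀ x ∈ Hset, form (vTy t x) hinf = Eb t := by intro t; cases t <;> decide
lemma LC : ∀ t : Ty, ∀ y ∈ Hset, form h0 (vTy t y) = Ea t := by intro t; cases t <;> decide
lemma LD : ∀ t : Ty, ∀ y ∈ Hset, form hinf (vTy t y) = -Eb t := by intro t; cases t <;> decide

lemma auxDiag : ∀ t : Ty, ∀ x ∈ Hset, ∀ y ∈ Hset,
    (x = -y → form (vTy t x) (vTy t y) = -1) ∧
    (x ≠ -y → 0 ≤ form (vTy t x) (vTy t y)) := by intro t; cases t <;> decide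

lemma aux01 : ∀ x ∈ Hset, ∀ y ∈ Hset,
    ((∃ h ∈ Hplus, y = -(h * x)) → form (vTy .zero x) (vTy .one y) = 0) ∧
    (¬(∃ h ∈ Hplus, y = -(h * x)) → 1 ≤ form (vTy .zero x) (vTy .one y)) := by decide

lemma aux0i : ∀ x ∈ Hset, ∀ y ∈ Hset,
    ((∃ h ∈ Hplus, x = h * y) → form (vTy .zero x) (vTy .inf y) = 0) ∧
    (¬(∃ h ∈ Hplus, x = h * y) → 1 ≤ form (vTy .zero x) (vTy .inf y)) := by decide

lemma aux10 : ∀ x ∈ Hset, ∀ y ∈ Hset,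
    ((∃ h ∈ Hplus, x = -(h * y)) → form (vTy .one x) (vTy .zero y) = -1) ∧
    (¬(∃ h ∈ Hplus, x = -(h * y)) → 0 ≤ form (vTy .one x) (vTy .zero y)) := by decide

lemma aux1i : ∀ x ∈ Hset, ∀ y ∈ Hset,
    ((∃ h ∈ Hplus, y = -(h * x)) → form (vTy .one x) (vTy .inf y) = 0) ∧
    (¬(∃ h ∈ Hplus, y = -(h * x)) → 1 ≤ form (vTy .one x) (vTy .inf y)) := by decide

lemma auxi0 : ∀ x ∈ Hset, ∀ y ∈ Hset,
    ((∃ h ∈ Hplus, y = h * x) → form (vTy .inf x) (vTy .zero y) = -1) ∧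
    (¬(∃ h ∈ Hplus, y = h * x) → 0 ≤ form (vTy .inf x) (vTy .zero y)) := by decide

lemma auxi1 : ∀ x ∈ Hset, ∀ y ∈ Hset,
    ((∃ h ∈ Hplus, x = -(h * y)) → form (vTy .inf x) (vTy .one y) = -1) ∧
    (¬(∃ h ∈ Hplus, x = -(h * y)) → 0 ≤ form (vTy .inf x) (vTy .one y)) := by decide

theorem stmt9 (p q : WithTop ℚ) (hpq : p < q) (x y : Quaternion ℤ)
    (hx : x ∈ Hset) (hy : y ∈ Hset) :
    form (vQ p x) (vQ q y) = 0 ↔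
      (match tyQ p, tyQ q with
      | .zero, .zero => x = -y ∧ dQ p q = 2
      | .one, .one => x = -y ∧ dQ p q = 2
      | .inf, .inf => x = -y ∧ dQ p q = 2
      | .zero, .one => (∃ h ∈ Hplus, y = -(h * x)) ∧ dQ p q = 1
      | .zero, .inf => (∃ h ∈ Hplus, x = h * y) ∧ dQ p q = 1
      | .one, .zero => (∃ h ∈ Hplus, x = -(h * y)) ∧ dQ p q = 1
      | .one, .inf => (∃ h ∈ Hplus, y = -(h * x)) ∧ dQ p q = 1
      | .inf, .zero => (∃ h ∈ Hplus, y = h * x) ∧ dQ p q = 1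
      | .inf, .one => (∃ h ∈ Hplus, x = -(h * y)) ∧ dQ p q = 1) := by
  have hEp := parity p
  have hEq := parity q
  have h2ap := half2_eq (aQ p)
  have h2bp := half2_eq (bQ p)
  have h2aq := half2_eq (aQ q)
  have h2bq := half2_eq (bQ q)
  set Mp := half2 (aQ p) with hMp
  set Np := half2 (bQ p) with hNp
  set Mq := half2 (aQ q) with hMq
  set Nq := half2 (bQ q) with hNq
  have hap : aQ p = 2 * Mp + Ea (tyQ p) := by omega
  have hbp : bQ p = 2 * Np + Eb (tyQ p) := by omega
  have haq : aQ q = 2 * Mq + Ea (tyQ q) := by omega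
  have hbq : bQ q = 2 * Nq + Eb (tyQ q) := by omega
  have key : 2 * form (vQ p x) (vQ q y)
      = (aQ q * bQ p - aQ p * bQ q)
        - (Ea (tyQ q) * Eb (tyQ p) - Ea (tyQ p) * Eb (tyQ q)
            - 2 * form (vTy (tyQ p) x) (vTy (tyQ q) y)) := by
    simp only [vQ, ← hMp, ← hNp, ← hMq, ← hNq]
    rw [form_expand, LA (tyQ p) x hx, LB (tyQ p) x hx, LC (tyQ q) y hy, LD (tyQ q) y hy,
      F00, F0i, Fi0, Fii, hap, hbp, haq, hbq]
    ring
  have hD := dpos p q hpq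
  have habs : dQ p q = aQ q * bQ p - aQ p * bQ q := by
    simp only [dQ]; exact abs_of_pos (by linarith)
  obtain ⟨D, hDef⟩ : ∃ D, aQ q * bQ p - aQ p * bQ q = D := ⟨_, rfl⟩
  rw [hDef] at key hD habs
  clear hap hbp haq hbq h2ap h2bp h2aq h2bq hEp hEq hMp hNp hMq hNq hDef
  rcases ht1 : tyQ p <;> rcases ht2 : tyQ q <;>
    rw [ht1, ht2] at key <;> simp only [Ea, Eb] at key <;> simp only [ht1, ht2, habs]
  · by_cases hc : x = -y
    · have hg := (auxDiag Ty.zero x hx y hy).1 hc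
      exact ⟨fun hf => ⟨hc, by omega⟩, fun ⟨_, h2⟩ => by omega⟩
    · have hg := (auxDiag Ty.zero x hx y hy).2 hc
      exact ⟨fun hf => absurd hf (by omega), fun ⟨h1, _⟩ => absurd h1 hc⟩
  · by_cases hc : ∃ h ∈ Hplus, y = -(h * x)
    · have hg := (aux01 x hx y hy).1 hc
      exact ⟨fun hf => ⟨hc, by omega⟩, fun ⟨_, h2⟩ => by omega⟩
    · have hg := (aux01 x hx y hy).2 hc
      exact ⟨fun hf => absurd hf (by omega), fun ⟨h1, _⟩ => absurd h1 hc⟩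
  · by_cases hc : ∃ h ∈ Hplus, x = h * y
    · have hg := (aux0i x hx y hy).1 hc
      exact ⟨fun hf => ⟨hc, by omega⟩, fun ⟨_, h2⟩ => by omega⟩
    · have hg := (aux0i x hx y hy).2 hc
      exact ⟨fun hf => absurd hf (by omega), fun ⟨h1, _⟩ => absurd h1 hc⟩
  · by_cases hc : ∃ h ∈ Hplus, x = -(h * y)
    · have hg := (aux10 x hx y hy).1 hc
      exact ⟨fun hf => ⟨hc, by omega⟩, fun ⟨_, h2⟩ => by omega⟩
    · have hg := (aux10 x hx y hy).2 hc
      exact ⟨fun hf => absurd hf (by omega), fun ⟨h1, _⟩ => absurd h1 hc⟩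
  · by_cases hc : x = -y
    · have hg := (auxDiag Ty.one x hx y hy).1 hc
      exact ⟨fun hf => ⟨hc, by omega⟩, fun ⟨_, h2⟩ => by omega⟩
    · have hg := (auxDiag Ty.one x hx y hy).2 hc
      exact ⟨fun hf => absurd hf (by omega), fun ⟨h1, _⟩ => absurd h1 hc⟩
  · by_cases hc : ∃ h ∈ Hplus, y = -(h * x)
    · have hg := (aux1i x hx y hy).1 hc
      exact ⟨fun hf => ⟨hc, by omega⟩, fun ⟨_, h2⟩ => by omega⟩
    · have hg := (aux1i x hx y hy).2 hc
      exact ⟨fun hf => absurd hf (by omega), fun ⟨h1, _⟩ => absurd h1 hc⟩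
  · by_cases hc : ∃ h ∈ Hplus, y = h * x
    · have hg := (auxi0 x hx y hy).1 hc
      exact ⟨fun hf => ⟨hc, by omega⟩, fun ⟨_, h2⟩ => by omega⟩
    · have hg := (auxi0 x hx y hy).2 hc
      exact ⟨fun hf => absurd hf (by omega), fun ⟨h1, _⟩ => absurd h1 hc⟩
  · by_cases hc : ∃ h ∈ Hplus, x = -(h * y)
    · have hg := (auxi1 x hx y hy).1 hc
      exact ⟨fun hf => ⟨hc, by omega⟩, fun ⟨_, h2⟩ => by omega⟩
    · have hg := (auxi1 x hx y hy).2 hc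
      exact ⟨fun hf => absurd hf (by omega), fun ⟨h1, _⟩ => absurd h1 hc⟩
  · by_cases hc : x = -y
    · have hg := (auxDiag Ty.inf x hx y hy).1 hc
      exact ⟨fun hf => ⟨hc, by omega⟩, fun ⟨_, h2⟩ => by omega⟩
    · have hg := (auxDiag Ty.inf x hx y hy).2 hc
      exact ⟨fun hf => absurd hf (by omega), fun ⟨h1, _⟩ => absurd h1 hc⟩
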